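/- (Theorem 2, invariance part) Let (X, μ) and (Y, ν) be probability spaces, T : X → X and S : Y → Y measure-preserving maps, and φ : X → Y a measure-preserving map with a measure-preserving measurable inverse such that φ ∘ T = S ∘ φ almost everywhere. Then a sequence (c_n) of positive reals is a scaling sequence for T if and only if it is a scaling sequence for S. -/
import Mathlib


open MeasureTheory Filter Set
open scoped ENNReal

/-- Shannon entropy of a finite measurable partition, encoded as a map `f : X → F`
into a finite set, with respect to the measure `μ` (convention `0 log 0 = 0`). -/
noncomputable def shannonEntropy {X : Type*} [MeasurableSpace X] (μ : Measure X)
    {F : Type*} [Fintype F] (f : X → F) : ℝ :=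
  -∑ a : F, (μ (f ⁻¹' {a})).toReal * Real.log (μ (f ⁻¹' {a})).toReal

/-- `H(ξ_T^n)`: the Shannon entropy of the joint partition
`x ↦ (f x, f (T x), …, f (T^[n-1] x))`. -/
noncomputable def jointH {X : Type*} [MeasurableSpace X] (μ : Measure X)
    (T : X → X) {F : Type*} [Fintype F] (f : X → F) (n : ℕ) : ℝ :=
  shannonEntropy μ (fun x => (fun i : Fin n => f (T^[(i : ℕ)] x)))

/-- The `ε`-entropy `H_ε(f)`: the infimum, over measurable sets `A` with
`μ A > 1 − ε`, of the Shannon entropy of `f` with respect to the normalized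
restriction of `μ` to `A`. -/
noncomputable def epsEntropy {X : Type*} [MeasurableSpace X] (μ : Measure X)
    {F : Type*} [Fintype F] (f : X → F) (ε : ℝ) : ℝ :=
  sInf {x : ℝ | ∃ A : Set X, MeasurableSet A ∧ ENNReal.ofReal (1 - ε) < μ A ∧
    x = shannonEntropy ((μ A)⁻¹ • μ.restrict A) f}

/-- The joint partition map `ξ_T^n : x ↦ (f x, f (T x), …, f (T^[n-1] x))`. -/
def jointMap {X F : Type*} (T : X → X) (f : X → F) (n : ℕ) : X → (Fin n → F) :=
  fun x => (fun i : Fin n => f (T^[(i : ℕ)] x))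

/-- `(c_n)` is a scaling sequence for `T`: the `c_n` are positive (for `n ≥ 1`);
for every finite partition `f`, `lim_{ε→0} limsup_n H_ε(ξ_T^n)/c_n < ∞`; and there
is a finite partition `f` with `lim_{ε→0} liminf_n H_ε(ξ_T^n)/c_n > 0`. Since
`H_ε` is nonincreasing in `ε`, the limits as `ε → 0⁺` are the suprema over
`ε ∈ (0,1)`; all quantities are computed in `[0,∞]`. -/
def IsScalingSeq {X : Type*} [MeasurableSpace X] (μ : Measure X) (T : X → X)
    (c : ℕ → ℝ) : Prop :=
  (∀ n : ℕ, 1 ≤ n → 0 < c n) ∧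
  (∀ (k : ℕ) (f : X → Fin k), Measurable f →
    (⨆ ε ∈ Set.Ioo (0 : ℝ) 1,
      Filter.limsup
        (fun n : ℕ => ENNReal.ofReal (epsEntropy μ (jointMap T f n) ε / c n))
        Filter.atTop) < ⊤) ∧
  (∃ (k : ℕ) (f : X → Fin k), Measurable f ∧
    0 < ⨆ ε ∈ Set.Ioo (0 : ℝ) 1,
      Filter.liminf
        (fun n : ℕ => ENNReal.ofReal (epsEntropy μ (jointMap T f n) ε / c n))
        Filter.atTop)


lemma shannon_eq' {X X' : Type*} [MeasurableSpace X] [MeasurableSpace X']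
    (μ : Measure X) (μ' : Measure X') {F : Type*} [Fintype F] (f : X → F) (f' : X' → F)
    (h : ∀ a, μ (f ⁻¹' {a}) = μ' (f' ⁻¹' {a})) :
    shannonEntropy μ f = shannonEntropy μ' f' := by
  unfold shannonEntropy; simp only [h]

lemma epsEntropy_congr_ae' {X : Type*} [MeasurableSpace X] (μ : Measure X)
    {F : Type*} [Fintype F] (f₁ f₂ : X → F) (h : f₁ =ᵐ[μ] f₂) (ε : ℝ) :
    epsEntropy μ f₁ ε = epsEntropy μ f₂ ε := by
  have setae : ∀ (m : Measure X), m ≤ μ → ∀ a : F, m (f₁ ⁻¹' {a}) = m (f₂ ⁻¹' {a}) := by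
    intro m hm a
    refine measure_congr ?_
    have h' : f₁ =ᵐ[m] f₂ := h.filter_mono (ae_mono hm)
    exact Filter.eventuallyEq_set.2 (h'.mono fun x hx => by simp [Set.mem_preimage, hx])
  unfold epsEntropy
  congr 1
  ext x
  constructor <;> rintro ⟨A, hA, hlt, rfl⟩ <;> refine ⟨A, hA, hlt, ?_⟩ <;>
    refine shannon_eq' _ _ _ _ fun a => ?_ <;>
    simp only [Measure.smul_apply, smul_eq_mul, Set.preimage_comp]
  · rw [setae (μ.restrict A) Measure.restrict_le_self a]
  · rw [setae (μ.restrict A) Measure.restrict_le_self a]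

lemma epsEntropy_comp' {X Y F : Type*} [MeasurableSpace X] [MeasurableSpace Y]
    [MeasurableSpace F] [Fintype F] [MeasurableSingletonClass F]
    (μ : Measure X) (ν : Measure Y) (φ : X → Y) (ψ : Y → X)
    (hφ : MeasurePreserving φ μ ν) (hψm : Measurable ψ)
    (hψφ : ∀ᵐ x ∂μ, ψ (φ x) = x) (g : Y → F) (hg : Measurable g) (ε : ℝ) :
    epsEntropy ν g ε = epsEntropy μ (g ∘ φ) ε := by
  unfold epsEntropy
  congr 1
  ext x
  constructor
  · rintro ⟨A, hA, hlt, rfl⟩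
    have hm : μ (φ ⁻¹' A) = ν A := hφ.measure_preimage hA.nullMeasurableSet
    refine ⟨φ ⁻¹' A, hφ.measurable hA, by rwa [hm], ?_⟩
    refine shannon_eq' _ _ _ _ fun a => ?_
    simp only [Measure.smul_apply, smul_eq_mul, Set.preimage_comp]
    rw [Measure.restrict_apply (hg (measurableSet_singleton a)),
      Measure.restrict_apply (hφ.measurable (hg (measurableSet_singleton a))),
      hm, ← Set.preimage_inter,
      hφ.measure_preimage ((hg (measurableSet_singleton a)).inter hA).nullMeasurableSet]
  · rintro ⟨A, hA, hlt, rfl⟩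
    have aeeq : φ ⁻¹' (ψ ⁻¹' A) =ᵐ[μ] A :=
      Filter.eventuallyEq_set.2 (hψφ.mono fun x hx => by simp [Set.mem_preimage, hx])
    have hm : ν (ψ ⁻¹' A) = μ A := by
      rw [← hφ.measure_preimage (hψm hA).nullMeasurableSet, measure_congr aeeq]
    refine ⟨ψ ⁻¹' A, hψm hA, by rwa [hm], ?_⟩
    refine shannon_eq' _ _ _ _ fun a => ?_
    simp only [Measure.smul_apply, smul_eq_mul, Set.preimage_comp]
    rw [Measure.restrict_apply (hφ.measurable (hg (measurableSet_singleton a))),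
      Measure.restrict_apply (hg (measurableSet_singleton a)), hm,
      ← hφ.measure_preimage
        ((hg (measurableSet_singleton a)).inter (hψm hA)).nullMeasurableSet,
      Set.preimage_inter]
    exact congrArg ((μ A)⁻¹ * ·) ((measure_congr (Filter.EventuallyEq.inter
      (Filter.EventuallyEq.refl (ae μ) (φ ⁻¹' (g ⁻¹' {a}))) aeeq)).symm)

lemma isScalingSeq_forward {X Y : Type*}
    [MeasurableSpace X] [MeasurableSpace Y]
    (μ : Measure X) (ν : Measure Y) [IsProbabilityMeasure μ] [IsProbabilityMeasure ν]
    (T : X → X) (S : Y → Y) (hT : MeasurePreserving T μ μ) (hS : MeasurePreserving S ν ν)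
    (φ : X → Y) (ψ : Y → X) (hφ : MeasurePreserving φ μ ν) (hψ : MeasurePreserving ψ ν μ)
    (hψφ : ∀ᵐ x ∂μ, ψ (φ x) = x)
    (hconj : ∀ᵐ x ∂μ, φ (T x) = S (φ x))
    (c : ℕ → ℝ) (h : IsScalingSeq μ T c) : IsScalingSeq ν S c := by
  have hiter : ∀ᵐ x ∂μ, ∀ i : ℕ, φ (T^[i] x) = S^[i] (φ x) := by
    have h1 : ∀ᵐ x ∂μ, ∀ j : ℕ, φ (T (T^[j] x)) = S (φ (T^[j] x)) := by
      rw [ae_all_iff]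
      intro j
      exact (hT.iterate j).quasiMeasurePreserving.tendsto_ae.eventually hconj
    refine h1.mono fun x hx i => ?_
    induction i with
    | zero => simp
    | succ i ih =>
        rw [Function.iterate_succ_apply', hx i, ih]; exact (Function.iterate_succ_apply' S i (φ x)).symm
  have hfix : ∀ᵐ x ∂μ, ∀ j : ℕ, ψ (φ (T^[j] x)) = T^[j] x := by
    rw [ae_all_iff]
    intro j
    exact (hT.iterate j).quasiMeasurePreserving.tendsto_ae.eventually hψφ
  have key : ∀ (k : ℕ) (g : Y → Fin k), Measurable g → ∀ (n : ℕ) (ε : ℝ),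
      epsEntropy ν (jointMap S g n) ε = epsEntropy μ (jointMap T (g ∘ φ) n) ε := by
    intro k g hg n ε
    have hgm : Measurable (jointMap S g n) :=
      measurable_pi_lambda _ fun i => hg.comp (hS.measurable.iterate (i : ℕ))
    rw [epsEntropy_comp' μ ν φ ψ hφ hψ.measurable hψφ _ hgm ε]
    refine epsEntropy_congr_ae' μ _ _ ?_ ε
    refine hiter.mono fun x hx => ?_
    funext i
    simp only [Function.comp_apply, jointMap, hx (i : ℕ)]
  refine ⟨h.1, ?_, ?_⟩
  · intro k g hg
    have hb := h.2.1 k (g ∘ φ) (hg.comp hφ.measurable)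
    have e : ∀ (n : ℕ) (ε : ℝ), epsEntropy ν (jointMap S g n) ε
        = epsEntropy μ (jointMap T (g ∘ φ) n) ε := fun n ε => key k g hg n ε
    simp only [e]
    exact hb
  · obtain ⟨k, f, hf, hpos⟩ := h.2.2
    refine ⟨k, f ∘ ψ, hf.comp hψ.measurable, ?_⟩
    have e : ∀ (n : ℕ) (ε : ℝ), epsEntropy ν (jointMap S (f ∘ ψ) n) ε
        = epsEntropy μ (jointMap T f n) ε := by
      intro n ε
      rw [key k (f ∘ ψ) (hf.comp hψ.measurable) n ε]
      refine epsEntropy_congr_ae' μ _ _ ?_ ε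
      refine hfix.mono fun x hx => ?_
      funext i
      simp only [Function.comp_apply, jointMap, hx (i : ℕ)]
    simp only [e]
    exact hpos

/-- Theorem 2, invariance part: if `φ` is an isomorphism of measure
spaces intertwining `T` and `S` almost everywhere, then `(c_n)` is a scaling
sequence for `T` iff it is a scaling sequence for `S`. -/
theorem isScalingSeq_isomorphism_invariant {X Y : Type*}
    [MeasurableSpace X] [MeasurableSpace Y]
    (μ : Measure X) (ν : Measure Y) [IsProbabilityMeasure μ] [IsProbabilityMeasure ν]
    (T : X → X) (S : Y → Y) (hT : MeasurePreserving T μ μ) (hS : MeasurePreserving S ν ν)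
    (φ : X → Y) (ψ : Y → X) (hφ : MeasurePreserving φ μ ν) (hψ : MeasurePreserving ψ ν μ)
    (hψφ : ∀ᵐ x ∂μ, ψ (φ x) = x) (hφψ : ∀ᵐ y ∂ν, φ (ψ y) = y)
    (hconj : ∀ᵐ x ∂μ, φ (T x) = S (φ x))
    (c : ℕ → ℝ) :
    IsScalingSeq μ T c ↔ IsScalingSeq ν S c := by
  have hconj' : ∀ᵐ y ∂ν, ψ (S y) = T (ψ y) := by
    have e1 : ∀ᵐ y ∂ν, φ (T (ψ y)) = S (φ (ψ y)) :=
      hψ.quasiMeasurePreserving.tendsto_ae.eventually hconj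
    have e3 : ∀ᵐ y ∂ν, ψ (φ (T (ψ y))) = T (ψ y) :=
      (hT.comp hψ).quasiMeasurePreserving.tendsto_ae.eventually hψφ
    filter_upwards [e1, hφψ, e3] with y h1 h2 h3
    calc ψ (S y) = ψ (S (φ (ψ y))) := by rw [h2]
      _ = ψ (φ (T (ψ y))) := by rw [h1]
      _ = T (ψ y) := h3
  constructor
  · exact isScalingSeq_forward μ ν T S hT hS φ ψ hφ hψ hψφ hconj c
  · exact isScalingSeq_forward ν μ S T hS hT ψ φ hψ hφ hφψ hconj' c
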